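/- arXiv:2405.20713 — 2 statements merged into one kernel-verified Lean document; each statement's English description precedes it below -/
import Mathlib

section
/- Let κ, n, m ∈ ℕ, let R_n be a (κ+n)×n matrix over 𝔽₂ whose bottom n×n block is I_n, let R_m be any (κ+m)×m matrix over 𝔽₂, let T be a set of tweaks with t ∈ T, let H : 𝔽₂^{κ+n} × T → 𝔽₂^{κ+m} be an arbitrary function, let φ : 𝔽₂ⁿ → 𝔽₂^m, and let W_a ∈ 𝔽₂^{κ+n}, W_c ∈ 𝔽₂^{κ+m}. Define the garbled table G : 𝔽₂ⁿ → 𝔽₂^{κ+m} by G(p) := H(W_a + R_n·(p + lsb_n(W_a)), t) + W_c + R_m·φ(p + lsb_n(W_a)). Then for every x ∈ 𝔽₂ⁿ, G is the unique table satisfying G(lsb_n(W_a + R_n·x)) = H(W_a + R_n·x, t) + W_c + R_m·φ(x) for all x, and the evaluator's computation recovers the correct output label: G(lsb_n(W_a + R_n·x)) + H(W_a + R_n·x, t) = W_c + R_m·φ(x). -/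
/-- The last `n` coordinates of a vector in 𝔽₂^{κ+n}. -/
def lsbn (κ n : ℕ) (W : Fin (κ + n) → ZMod 2) : Fin n → ZMod 2 :=
  fun i => W (Fin.natAdd κ i)

/-- the garbled table `G` of a projection gate `Proj_φ`,
defined by `G p = H(W_a + R_n·(p + lsb_n W_a), t) + W_c + R_m·φ(p + lsb_n W_a)`,
is the unique table storing at index `lsb_n(W_a^x)` the ciphertext
`H(W_a^x, t) + W_c^{φ(x)}`, and the evaluator recovers the correct output
label: `G(lsb_n(W_a^x)) + H(W_a^x, t) = W_c + R_m·φ(x)`. -/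
theorem projection_gate_correct (κ n m : ℕ)
    (Rn : Matrix (Fin (κ + n)) (Fin n) (ZMod 2))
    (hRn : ∀ i j : Fin n, Rn (Fin.natAdd κ i) j = if i = j then 1 else 0)
    (Rm : Matrix (Fin (κ + m)) (Fin m) (ZMod 2))
    (T : Type*) (t : T)
    (H : (Fin (κ + n) → ZMod 2) → T → (Fin (κ + m) → ZMod 2))
    (φ : (Fin n → ZMod 2) → (Fin m → ZMod 2))
    (Wa : Fin (κ + n) → ZMod 2) (Wc : Fin (κ + m) → ZMod 2) :
    let G : (Fin n → ZMod 2) → (Fin (κ + m) → ZMod 2) := fun p =>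
      H (Wa + Rn.mulVec (p + lsbn κ n Wa)) t + Wc + Rm.mulVec (φ (p + lsbn κ n Wa))
    (∀ x : Fin n → ZMod 2,
        G (lsbn κ n (Wa + Rn.mulVec x)) =
          H (Wa + Rn.mulVec x) t + Wc + Rm.mulVec (φ x)) ∧
    (∀ G' : (Fin n → ZMod 2) → (Fin (κ + m) → ZMod 2),
        (∀ x : Fin n → ZMod 2,
          G' (lsbn κ n (Wa + Rn.mulVec x)) =
            H (Wa + Rn.mulVec x) t + Wc + Rm.mulVec (φ x)) → G' = G) ∧
    (∀ x : Fin n → ZMod 2,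
        G (lsbn κ n (Wa + Rn.mulVec x)) + H (Wa + Rn.mulVec x) t =
          Wc + Rm.mulVec (φ x)) := by
  intro G
  have key : ∀ x : Fin n → ZMod 2, lsbn κ n (Wa + Rn.mulVec x) = lsbn κ n Wa + x := by
    intro x
    funext i
    simp only [lsbn, Pi.add_apply, Matrix.mulVec, dotProduct]
    have : ∑ j, Rn (Fin.natAdd κ i) j * x j = x i := by
      rw [Finset.sum_eq_single i]
      · simp [hRn]
      · intro j _ hj; simp [hRn, (Ne.symm hj)]
      · simp
    rw [this]
  have cancel : ∀ v w : Fin n → ZMod 2, v + w + v = w := by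
    intro v w; funext i
    simp only [Pi.add_apply]
    exact (by decide : ∀ a b : ZMod 2, a + b + a = b) _ _
  have hG : ∀ x : Fin n → ZMod 2,
      G (lsbn κ n (Wa + Rn.mulVec x)) =
        H (Wa + Rn.mulVec x) t + Wc + Rm.mulVec (φ x) := by
    intro x
    show H (Wa + Rn.mulVec (lsbn κ n (Wa + Rn.mulVec x) + lsbn κ n Wa)) t + Wc +
        Rm.mulVec (φ (lsbn κ n (Wa + Rn.mulVec x) + lsbn κ n Wa)) = _
    rw [key x]
    have : lsbn κ n Wa + x + lsbn κ n Wa = x := cancel _ _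
    rw [this]
  refine ⟨hG, ?_, ?_⟩
  · intro G' hG'
    funext p
    have hx := hG' (p + lsbn κ n Wa)
    have hx2 := hG (p + lsbn κ n Wa)
    have hp : lsbn κ n (Wa + Rn.mulVec (p + lsbn κ n Wa)) = p := by
      rw [key]
      funext i
      simp only [Pi.add_apply]
      exact (by decide : ∀ a b : ZMod 2, a + (b + a) = b) _ _
    rw [hp] at hx hx2
    rw [hx, hx2]
  · intro x
    rw [hG x]
    funext i
    simp only [Pi.add_apply]
    have h3 : ∀ a b c : ZMod 2, a + b + c + a = b + c := by decide
    exact h3 _ _ _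
end

section
/- The garbling scheme Π is correct for every choice of randomness and every hash function: for every circuit f built from XOR gates and projection gates, every input x, every function H : 𝔽₂^k × ℕ → 𝔽₂^k, every choice of wire-label-offset matrices R_1, …, R_n̄ (each R_n having bottom block I_n), and every choice of the uniformly-drawable zero-labels (one per input wire and one per projection-gate output wire), we have Decode(Eval(GC, Encode(e, x)), d) = f(x), where (GC, e, d) is the output of Garble on f and f(x) is the plaintext evaluation of the circuit. Precisely: if v_i denotes the plaintext value on wire i when the circuit is evaluated on x, then the label the evaluator computes on every wire i equals W_i^{0} + R_{ℓ(i)}·v_i, and hence d_i + lsb_{ℓ(i)} of the evaluator's output-wire label equals v_i for every output wire i. -/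
/-- An `n`-bit string is a vector in 𝔽₂ⁿ. -/
abbrev Bits (n : ℕ) : Type := Fin n → ZMod 2

/-- Cast an `a`-bit string along an equality of lengths. -/
def castBits {a b : ℕ} (h : a = b) (v : Bits a) : Bits b :=
  fun j => v (Fin.cast h.symm j)

/-- `lsb k n W` : the last `n` coordinates of `W ∈ 𝔽₂^k` (meaningful when `n ≤ k`). -/
def lsb {k : ℕ} (n : ℕ) (W : Bits k) : Bits n :=
  fun j => if h : k - n + (j : ℕ) < k then W ⟨k - n + (j : ℕ), h⟩ else 0

/-- A gate whose input wires have index `< bound` and whose output wire carries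
`outLen`-bit values; `ℓ` gives the bit-length of every wire. Either an XOR gate
on two earlier wires of the same bit-length, or a unary projection gate
computing an arbitrary function `φ`. -/
inductive Gate (ℓ : ℕ → ℕ) (bound outLen : ℕ) : Type
  | xor (a b : ℕ) (ha : a < bound) (hb : b < bound)
      (hla : ℓ a = outLen) (hlb : ℓ b = outLen) : Gate ℓ bound outLen
  | proj (a : ℕ) (ha : a < bound) (φ : Bits (ℓ a) → Bits outLen) : Gate ℓ bound outLen

/-- A circuit with `p` input wires (indices `0, …, p-1`) and `q` gates in
topological order; the `g`-th gate outputs wire `p + g` and may only use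
earlier wires. Wire `i` carries `ℓ i`-bit values with `ℓ i ≤ nbar`. -/
structure Circuit (nbar : ℕ) where
  p : ℕ
  q : ℕ
  ℓ : ℕ → ℕ
  hℓ : ∀ i, ℓ i ≤ nbar
  gates : (g : Fin q) → Gate ℓ (p + (g : ℕ)) (ℓ (p + (g : ℕ)))

/-- Plaintext evaluation: the value `v i` carried by wire `i` when the circuit
is evaluated on input `x`. -/
def Circuit.plainEval {nbar : ℕ} (C : Circuit nbar)
    (x : (i : ℕ) → Bits (C.ℓ i)) (i : ℕ) : Bits (C.ℓ i) :=
  if hp : i < C.p then x i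
  else if hq : i - C.p < C.q then
    have e : C.p + (i - C.p) = i := by omega
    match C.gates ⟨i - C.p, hq⟩ with
    | .xor a b ha hb hla hlb =>
        castBits (hla.trans (congrArg C.ℓ e)) (C.plainEval x a)
          + castBits (hlb.trans (congrArg C.ℓ e)) (C.plainEval x b)
    | .proj a ha φ =>
        castBits (congrArg C.ℓ e) (φ (C.plainEval x a))
  else 0
termination_by i
decreasing_by all_goals (simp only [Fin.val_mk] at *; omega)

/-- Garbling, zero-labels: input wires and projection outputs get the freely
chosen labels `W0 i`; an XOR gate's zero-label is the XOR of its input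
zero-labels. -/
def Circuit.zeroLabel {nbar : ℕ} (C : Circuit nbar) {k : ℕ}
    (W0 : ℕ → Bits k) (i : ℕ) : Bits k :=
  if hp : i < C.p then W0 i
  else if hq : i - C.p < C.q then
    match C.gates ⟨i - C.p, hq⟩ with
    | .xor a b _ _ _ _ => C.zeroLabel W0 a + C.zeroLabel W0 b
    | .proj _ _ _ => W0 i
  else 0
termination_by i
decreasing_by all_goals (simp only [Fin.val_mk] at *; omega)

/-- Garbling, the garbled table: for the projection gate `g` (with input wire
`a` of bit-length `n = ℓ a` and output wire `i = p + g`), the row stored at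
pointer index `lsb_n (W_a^x)` is `H(W_a^x, i) + W_i^0 + R_m·φ(x)`; i.e. the
row at index `ptr` corresponds to `x = ptr + lsb_n (W_a^0)`. XOR gates have no
table. -/
def Circuit.GC {nbar : ℕ} (C : Circuit nbar) {k : ℕ}
    (R : (n : ℕ) → Matrix (Fin k) (Fin n) (ZMod 2))
    (H : Bits k → ℕ → Bits k) (W0 : ℕ → Bits k)
    (g : Fin C.q) (n : ℕ) (ptr : Bits n) : Bits k :=
  match C.gates g with
  | .xor _ _ _ _ _ _ => 0
  | .proj a _ φ =>
      if hn : n = C.ℓ a then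
        let Wa0 := C.zeroLabel W0 a
        let x : Bits (C.ℓ a) := castBits hn (ptr + lsb n Wa0)
        H (Wa0 + (R (C.ℓ a)).mulVec x) (C.p + (g : ℕ))
          + C.zeroLabel W0 (C.p + (g : ℕ))
          + (R (C.ℓ (C.p + (g : ℕ)))).mulVec (φ x)
      else 0

/-- Evaluation: on wire `i`, the evaluator holds `X i` for input wires; for an
XOR gate it XORs the two input labels; for a projection gate it decrypts the
table row selected by the pointer bits of the input label. -/
def Circuit.evalGC {nbar : ℕ} (C : Circuit nbar) {k : ℕ}
    (GCtab : (g : Fin C.q) → (n : ℕ) → Bits n → Bits k)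
    (H : Bits k → ℕ → Bits k) (X : ℕ → Bits k) (i : ℕ) : Bits k :=
  if hp : i < C.p then X i
  else if hq : i - C.p < C.q then
    match C.gates ⟨i - C.p, hq⟩ with
    | .xor a b _ _ _ _ => C.evalGC GCtab H X a + C.evalGC GCtab H X b
    | .proj a _ _ =>
        GCtab ⟨i - C.p, hq⟩ (C.ℓ a) (lsb (C.ℓ a) (C.evalGC GCtab H X a))
          + H (C.evalGC GCtab H X a) i
  else 0
termination_by i
decreasing_by all_goals (simp only [Fin.val_mk] at *; omega)

lemma lsb_add {k n : ℕ} (u w : Bits k) : lsb n (u + w) = lsb n u + lsb n w := by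
  funext j; simp only [lsb, Pi.add_apply]; split <;> simp

lemma bits_add_self {n : ℕ} (u : Bits n) : u + u = 0 := by
  funext j; simp [CharTwo.add_self_eq_zero]

lemma castBits_rfl {a : ℕ} (v : Bits a) : castBits rfl v = v := rfl

lemma castBits_add {a b : ℕ} (h : a = b) (u w : Bits a) :
    castBits h (u + w) = castBits h u + castBits h w := rfl

lemma mulVec_castBits {k a b : ℕ} (h : a = b)
    (R : (n : ℕ) → Matrix (Fin k) (Fin n) (ZMod 2)) (v : Bits a) :
    (R b).mulVec (castBits h v) = (R a).mulVec v := by subst h; rfl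

lemma garbling_key (κ nbar : ℕ) (C : Circuit nbar)
    (H : Bits (κ + nbar) → ℕ → Bits (κ + nbar))
    (R : (n : ℕ) → Matrix (Fin (κ + nbar)) (Fin n) (ZMod 2))
    (hR : ∀ n, n ≤ nbar → ∀ x : Bits n, lsb n ((R n).mulVec x) = x)
    (W0 : ℕ → Bits (κ + nbar))
    (x : (i : ℕ) → Bits (C.ℓ i)) :
    ∀ i,
      C.evalGC (C.GC R H W0) H
          (fun j => C.zeroLabel W0 j + (R (C.ℓ j)).mulVec (x j)) i
        = C.zeroLabel W0 i + (R (C.ℓ i)).mulVec (C.plainEval x i) := by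
  intro i
  induction i using Nat.strong_induction_on with
  | _ i IH =>
    rw [Circuit.evalGC, Circuit.zeroLabel, Circuit.plainEval]
    by_cases hp : i < C.p
    · simp [hp]
    · simp only [hp, dite_false]
      by_cases hq : i - C.p < C.q
      · simp only [hq, dite_true]
        have e : C.p + (i - C.p) = i := by omega
        cases hg : C.gates ⟨i - C.p, hq⟩ with
        | xor a b ha hb hla hlb =>
          have ha' : a < i := by simpa [e] using ha
          have hb' : b < i := by simpa [e] using hb
          dsimp only
          rw [IH a ha', IH b hb']
          have hla' : C.ℓ a = C.ℓ i := hla.trans (congrArg C.ℓ e)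
          have hlb' : C.ℓ b = C.ℓ i := hlb.trans (congrArg C.ℓ e)
          simp only [Matrix.mulVec_add, mulVec_castBits]
          abel
        | proj a ha φ =>
          have ha' : a < i := by simpa [e] using ha
          dsimp only
          rw [IH a ha']
          have hle : C.ℓ a ≤ nbar := C.hℓ a
          rw [Circuit.GC, hg]
          simp only [dite_eq_ite, if_pos rfl, if_true, castBits_rfl]
          have hptr :
              lsb (C.ℓ a)
                  (C.zeroLabel W0 a + (R (C.ℓ a)).mulVec (C.plainEval x a))
                + lsb (C.ℓ a) (C.zeroLabel W0 a)
              = C.plainEval x a := by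
            rw [lsb_add, hR _ hle]
            rw [add_comm (lsb (C.ℓ a) (C.zeroLabel W0 a)), add_assoc,
              bits_add_self, add_zero]
          rw [hptr]
          have hz : C.zeroLabel W0 (C.p + (i - C.p)) = W0 i := by
            rw [e, Circuit.zeroLabel]
            simp only [hp, dite_false, hq, dite_true]
            rw [hg]
          have hH : ∀ W : Bits (κ + nbar), H W (C.p + (i - C.p)) = H W i := by
            intro W; rw [e]
          simp only [mulVec_castBits, hz, hH]
          abel_nf
          simp [two_smul, bits_add_self]
      · simp [hq]

/-- correctness of the garbling scheme Π, for every circuit,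
input, hash function `H`, offset matrices `R_n` (whose bottom block acts as
the identity, i.e. `lsb_n (R_n·x) = x`) and every choice of zero-labels: the
label the evaluator computes on every wire `i` is `W_i^0 + R_{ℓ(i)}·v_i` where
`v_i` is the plaintext value of wire `i`, and hence decoding with
`d_i = lsb_{ℓ(i)} (W_i^0)` returns `v_i` on every wire; in particular
`Decode(Eval(GC, Encode(e, x)), d) = f(x)`. -/
theorem garbling_scheme_correct (κ nbar : ℕ) (C : Circuit nbar)
    (H : Bits (κ + nbar) → ℕ → Bits (κ + nbar))
    (R : (n : ℕ) → Matrix (Fin (κ + nbar)) (Fin n) (ZMod 2))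
    (hR : ∀ n, n ≤ nbar → ∀ x : Bits n, lsb n ((R n).mulVec x) = x)
    (W0 : ℕ → Bits (κ + nbar))
    (x : (i : ℕ) → Bits (C.ℓ i)) :
    let Z : ℕ → Bits (κ + nbar) := C.zeroLabel W0
    let X : ℕ → Bits (κ + nbar) := fun i => Z i + (R (C.ℓ i)).mulVec (x i)
    let Lab : ℕ → Bits (κ + nbar) := C.evalGC (C.GC R H W0) H X
    let v : (i : ℕ) → Bits (C.ℓ i) := C.plainEval x
    ∀ i < C.p + C.q,
      Lab i = Z i + (R (C.ℓ i)).mulVec (v i) ∧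
        lsb (C.ℓ i) (Z i) + lsb (C.ℓ i) (Lab i) = v i := by
  intro Z X Lab v i _
  have h1 : Lab i = Z i + (R (C.ℓ i)).mulVec (v i) :=
    garbling_key κ nbar C H R hR W0 x i
  refine ⟨h1, ?_⟩
  rw [h1, lsb_add, hR _ (C.hℓ i), ← add_assoc, bits_add_self, zero_add]
end
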